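/- Let E be a metric space. The space (UC_b(E), τ_K), where τ_K is the topology generated by p_{K,μ}(f) = sup_{x∈K}|f(x)| + |∫_E f dμ| over compact K and μ ∈ ca(E), is sequentially complete if and only if UC_b(E) = C_b(E). -/

import Mathlib

open Filter Topology MeasureTheory

/-- Integration of a function against a finite countably additive signed Borel measure,
via its Jordan decomposition. -/
noncomputable def intSM' {E : Type*} [MeasurableSpace E]
    (s : SignedMeasure E) (f : E → ℝ) : ℝ :=
  (∫ x, f x ∂s.toJordanDecomposition.posPart) -
    ∫ x, f x ∂s.toJordanDecomposition.negPart

/-- The locally convex topology τ_K on C_b(E). -/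
noncomputable def tauK (E : Type*) [MetricSpace E] [MeasurableSpace E] [BorelSpace E] :
    TopologicalSpace (BoundedContinuousFunction E ℝ) :=
  (⨅ (K : Set E) (_ : IsCompact K) (_ : K.Nonempty),
      TopologicalSpace.induced
        (fun f : BoundedContinuousFunction E ℝ => UniformFun.ofFun fun x : K => f x)
        inferInstance) ⊓
    ⨅ s : SignedMeasure E,
      TopologicalSpace.induced (fun f : BoundedContinuousFunction E ℝ => intSM' s ⇑f)
        inferInstance

open Uniformity UniformConvergence NNReal ENNReal

set_option linter.unusedSectionVars false

section
variable {E : Type*} [MetricSpace E] [MeasurableSpace E] [BorelSpace E]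

lemma intSM'_sub (s : SignedMeasure E) (f g : BoundedContinuousFunction E ℝ) :
    intSM' s ⇑(f - g) = intSM' s ⇑f - intSM' s ⇑g := by
  simp only [intSM', BoundedContinuousFunction.coe_sub, Pi.sub_apply]
  rw [integral_sub (f.integrable _) (g.integrable _),
    integral_sub (f.integrable _) (g.integrable _)]
  ring

lemma intSM'_zero (s : SignedMeasure E) :
    intSM' s ⇑(0 : BoundedContinuousFunction E ℝ) = 0 := by
  simp [intSM']

lemma intSM'_toSignedMeasure (μ : Measure E) [IsFiniteMeasure μ]
    (f : E → ℝ) : intSM' μ.toSignedMeasure f = ∫ x, f x ∂μ := by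
  have hj : (⟨μ, 0, Measure.MutuallySingular.zero_right⟩ :
      JordanDecomposition E).toSignedMeasure = μ.toSignedMeasure := by
    simp [JordanDecomposition.toSignedMeasure, Measure.toSignedMeasure_zero]
  have h2 : μ.toSignedMeasure.toJordanDecomposition =
      (⟨μ, 0, Measure.MutuallySingular.zero_right⟩ : JordanDecomposition E) := by
    rw [← hj, JordanDecomposition.toJordanDecomposition_toSignedMeasure]
  rw [intSM', h2]
  simp

lemma nhds_tauK (g : BoundedContinuousFunction E ℝ) : @nhds _ (tauK E) g =
    (⨅ (K : Set E) (_ : IsCompact K) (_ : K.Nonempty),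
      Filter.comap (fun f : BoundedContinuousFunction E ℝ => UniformFun.ofFun fun x : K => f x)
        (𝓝 (UniformFun.ofFun fun x : K => g x))) ⊓
    ⨅ s : SignedMeasure E,
      Filter.comap (fun f : BoundedContinuousFunction E ℝ => intSM' s ⇑f)
        (𝓝 (intSM' s ⇑g)) := by
  refine Eq.trans (@_root_.nhds_inf (BoundedContinuousFunction E ℝ)
    (⨅ (K : Set E) (_ : IsCompact K) (_ : K.Nonempty),
      TopologicalSpace.induced
        (fun f : BoundedContinuousFunction E ℝ => UniformFun.ofFun fun x : K => f x)
        inferInstance)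
    (⨅ s : SignedMeasure E,
      TopologicalSpace.induced (fun f : BoundedContinuousFunction E ℝ => intSM' s ⇑f)
        inferInstance) g) ?_
  congr 1
  · exact (@nhds_iInf _ _ _ g).trans (iInf_congr fun K =>
      (@nhds_iInf _ _ _ g).trans (iInf_congr fun hK =>
        (@nhds_iInf _ _ _ g).trans (iInf_congr fun hne => nhds_induced _ g)))
  · exact (@nhds_iInf _ _ _ g).trans (iInf_congr fun s => nhds_induced _ g)

lemma tendsto_tauK_iff {ι : Type*} {l : Filter ι} {F : ι → BoundedContinuousFunction E ℝ}
    {g : BoundedContinuousFunction E ℝ} :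
    Tendsto F l (@nhds _ (tauK E) g) ↔
      (∀ K : Set E, IsCompact K → K.Nonempty →
        TendstoUniformly (fun n (x : K) => F n x) (fun x : K => g x) l) ∧
      (∀ s : SignedMeasure E, Tendsto (fun n => intSM' s ⇑(F n)) l (𝓝 (intSM' s ⇑g))) := by
  rw [nhds_tauK, tendsto_inf]
  simp only [tendsto_iInf, tendsto_comap_iff]
  constructor
  · rintro ⟨h1, h2⟩
    refine ⟨fun K hK hne => ?_, h2⟩
    exact UniformFun.tendsto_iff_tendstoUniformly.1 (h1 K hK hne)
  · rintro ⟨h1, h2⟩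
    refine ⟨fun K hK hne => ?_, h2⟩
    exact UniformFun.tendsto_iff_tendstoUniformly.2 (h1 K hK hne)

lemma cauchy_tauK_compact {F : ℕ → BoundedContinuousFunction E ℝ}
    (hC : ∀ U ∈ @nhds _ (tauK E) (0 : BoundedContinuousFunction E ℝ),
      ∃ N : ℕ, ∀ m ≥ N, ∀ n ≥ N, F m - F n ∈ U)
    {K : Set E} (hK : IsCompact K) (hne : K.Nonempty) {ε : ℝ} (hε : 0 < ε) :
    ∃ N : ℕ, ∀ m ≥ N, ∀ n ≥ N, ∀ x ∈ K, dist (F m x) (F n x) < ε := by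
  set V : Set (ℝ × ℝ) := {p | dist p.1 p.2 < ε} with hVdef
  have hV : V ∈ 𝓤 ℝ := Metric.dist_mem_uniformity hε
  set f₀ : ↥K →ᵤ ℝ := UniformFun.ofFun fun x : K => (0 : BoundedContinuousFunction E ℝ) x
  set W : Set (↥K →ᵤ ℝ) := {u | (f₀, u) ∈ UniformFun.gen ↥K ℝ V} with hWdef
  have hW : W ∈ 𝓝 f₀ := (UniformFun.hasBasis_nhds ↥K ℝ f₀).mem_of_mem hV
  set U : Set (BoundedContinuousFunction E ℝ) :=
    (fun f : BoundedContinuousFunction E ℝ => UniformFun.ofFun fun x : K => f x) ⁻¹' W with hUdef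
  have hU : U ∈ @nhds _ (tauK E) (0 : BoundedContinuousFunction E ℝ) := by
    rw [nhds_tauK]
    exact mem_inf_of_left (mem_iInf_of_mem K (mem_iInf_of_mem hK
      (mem_iInf_of_mem hne (preimage_mem_comap hW))))
  obtain ⟨N, hN⟩ := hC U hU
  refine ⟨N, fun m hm n hn x hx => ?_⟩
  have h2 : dist ((0 : BoundedContinuousFunction E ℝ) x) ((F m - F n) x) < ε :=
    hN m hm n hn (⟨x, hx⟩ : ↥K)
  simp only [BoundedContinuousFunction.coe_zero, Pi.zero_apply,
    BoundedContinuousFunction.coe_sub, Pi.sub_apply, Real.dist_eq, zero_sub, abs_neg] at h2 ⊢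
  exact h2

lemma cauchy_tauK_sm {F : ℕ → BoundedContinuousFunction E ℝ}
    (hC : ∀ U ∈ @nhds _ (tauK E) (0 : BoundedContinuousFunction E ℝ),
      ∃ N : ℕ, ∀ m ≥ N, ∀ n ≥ N, F m - F n ∈ U)
    (s : SignedMeasure E) : CauchySeq fun n => intSM' s ⇑(F n) := by
  rw [Metric.cauchySeq_iff]
  intro ε hε
  set U : Set (BoundedContinuousFunction E ℝ) :=
    (fun f : BoundedContinuousFunction E ℝ => intSM' s ⇑f) ⁻¹'
      Metric.ball (intSM' s ⇑(0 : BoundedContinuousFunction E ℝ)) ε with hUdef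
  have hU : U ∈ @nhds _ (tauK E) (0 : BoundedContinuousFunction E ℝ) := by
    rw [nhds_tauK]
    exact mem_inf_of_right (mem_iInf_of_mem s
      (preimage_mem_comap (Metric.ball_mem_nhds _ hε)))
  obtain ⟨N, hN⟩ := hC U hU
  refine ⟨N, fun m hm n hn => ?_⟩
  have h2 := hN m hm n hn
  simp only [hUdef, Set.mem_preimage, Metric.mem_ball, intSM'_sub, intSM'_zero] at h2
  rw [Real.dist_eq, sub_zero] at h2
  rw [Real.dist_eq]
  exact h2

lemma cauchy_of_tendsto_tauK {F : ℕ → BoundedContinuousFunction E ℝ}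
    {g : BoundedContinuousFunction E ℝ}
    (h : Tendsto F atTop (@nhds _ (tauK E) g)) :
    ∀ U ∈ @nhds _ (tauK E) (0 : BoundedContinuousFunction E ℝ),
      ∃ N : ℕ, ∀ m ≥ N, ∀ n ≥ N, F m - F n ∈ U := by
  rw [tendsto_tauK_iff] at h
  obtain ⟨h1, h2⟩ := h
  have hψ : Tendsto (fun p : ℕ × ℕ => F p.1 - F p.2) (atTop ×ˢ atTop)
      (@nhds _ (tauK E) (0 : BoundedContinuousFunction E ℝ)) := by
    rw [tendsto_tauK_iff]
    constructor
    · intro K hK hne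
      rw [Metric.tendstoUniformly_iff]
      intro ε hε
      have hh := Metric.tendstoUniformly_iff.1 (h1 K hK hne) (ε / 2) (by linarith)
      filter_upwards [hh.prod_inl atTop, hh.prod_inr atTop] with p hp1 hp2 x
      have t1 := hp1 x
      have t2 := hp2 x
      simp only [BoundedContinuousFunction.coe_zero, Pi.zero_apply,
        BoundedContinuousFunction.coe_sub, Pi.sub_apply, Real.dist_eq] at t1 t2 ⊢
      calc |0 - ((F p.1) x - (F p.2) x)| = |((g x) - (F p.1 x)) - (g x - F p.2 x)| := by
            ring_nf
        _ ≤ |g x - F p.1 x| + |g x - F p.2 x| := abs_sub _ _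
        _ < ε / 2 + ε / 2 := by exact add_lt_add t1 t2
        _ = ε := by ring
    · intro s
      have : (fun p : ℕ × ℕ => intSM' s ⇑(F p.1 - F p.2)) =
          fun p : ℕ × ℕ => intSM' s ⇑(F p.1) - intSM' s ⇑(F p.2) := by
        funext p; exact intSM'_sub s _ _
      rw [this, intSM'_zero]
      have := ((h2 s).comp (tendsto_fst : Tendsto Prod.fst (atTop ×ˢ atTop) atTop)).sub
        ((h2 s).comp (tendsto_snd : Tendsto Prod.snd (atTop ×ˢ atTop) atTop))
      simpa using this
  intro U hU
  have hpre : (fun p : ℕ × ℕ => F p.1 - F p.2) ⁻¹' U ∈ atTop ×ˢ atTop := hψ hU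
  rw [Filter.mem_prod_iff] at hpre
  obtain ⟨A, hA, B, hB, hAB⟩ := hpre
  obtain ⟨N₁, hN₁⟩ := mem_atTop_sets.1 hA
  obtain ⟨N₂, hN₂⟩ := mem_atTop_sets.1 hB
  refine ⟨max N₁ N₂, fun m hm n hn => ?_⟩
  exact hAB (Set.mk_mem_prod (hN₁ m (le_trans (le_max_left _ _) hm)) (hN₂ n (le_trans (le_max_right _ _) hn)))

end

section
variable {E : Type*} [MetricSpace E] [Nonempty E] (f : BoundedContinuousFunction E ℝ)

noncomputable def mor (n : ℕ) : E → ℝ := fun x => ⨅ y, (f y + n * dist x y)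

lemma mor_bddBelow (n : ℕ) (x : E) :
    BddBelow (Set.range fun y => f y + n * dist x y) := by
  refine ⟨-‖f‖, fun z hz => ?_⟩
  obtain ⟨y, rfl⟩ := hz
  show -‖f‖ ≤ f y + n * dist x y
  have h1 : -‖f‖ ≤ f y := neg_le_of_abs_le (f.norm_coe_le_norm y)
  have h2 : (0:ℝ) ≤ n * dist x y := by positivity
  linarith

lemma mor_le (n : ℕ) (x : E) : mor f n x ≤ f x := by
  have := ciInf_le (mor_bddBelow f n x) x
  simpa [mor] using this

lemma le_mor (n : ℕ) (x : E) : -‖f‖ ≤ mor f n x := by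
  refine le_ciInf fun y => ?_
  show -‖f‖ ≤ f y + n * dist x y
  have h1 : -‖f‖ ≤ f y := neg_le_of_abs_le (f.norm_coe_le_norm y)
  have h2 : (0:ℝ) ≤ n * dist x y := by positivity
  linarith

lemma mor_abs_le (n : ℕ) (x : E) : |mor f n x| ≤ ‖f‖ := by
  rw [abs_le]
  exact ⟨le_mor f n x, (mor_le f n x).trans (le_of_abs_le (f.norm_coe_le_norm x))⟩

lemma mor_lip (n : ℕ) (x x' : E) : mor f n x ≤ mor f n x' + n * dist x x' := by
  rw [← sub_le_iff_le_add]
  refine le_ciInf fun y => ?_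
  show mor f n x - n * dist x x' ≤ f y + n * dist x' y
  have h : mor f n x ≤ f y + n * dist x y := ciInf_le (mor_bddBelow f n x) y
  have ht : dist x y ≤ dist x x' + dist x' y := dist_triangle x x' y
  have hn : (0:ℝ) ≤ n := Nat.cast_nonneg n
  have hm := mul_le_mul_of_nonneg_left ht hn
  linarith

lemma mor_lipschitz (n : ℕ) : LipschitzWith (n : ℝ≥0) (mor f n) := by
  refine LipschitzWith.of_dist_le_mul fun x y => ?_
  rw [Real.dist_eq, abs_sub_le_iff]
  have h1 := mor_lip f n x y
  have h2 := mor_lip f n y x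
  rw [dist_comm y x] at h2
  push_cast
  constructor <;> linarith

lemma mor_continuous (n : ℕ) : Continuous (mor f n) := (mor_lipschitz f n).continuous

lemma mor_uniformContinuous (n : ℕ) : UniformContinuous (mor f n) :=
  (mor_lipschitz f n).uniformContinuous

lemma compact_modulus {K : Set E} (hK : IsCompact K) {ε : ℝ} (hε : 0 < ε) :
    ∃ δ > 0, ∀ x ∈ K, ∀ y : E, dist x y < δ → |f x - f y| < ε := by
  by_contra hcon
  push_neg at hcon
  have hch : ∀ k : ℕ, ∃ x ∈ K, ∃ y : E, dist x y < 1 / (k + 1) ∧ ε ≤ |f x - f y| := by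
    intro k
    obtain ⟨x, hxK, y, hxy, hfy⟩ := hcon (1 / (k + 1)) (by positivity)
    exact ⟨x, hxK, y, hxy, hfy⟩
  choose x hxK y hxy hfy using hch
  obtain ⟨a, haK, φ, hφ, hxa⟩ := hK.tendsto_subseq hxK
  have hxa' : Tendsto (fun k => x (φ k)) atTop (𝓝 a) := hxa
  have hya : Tendsto (fun k => y (φ k)) atTop (𝓝 a) := by
    rw [tendsto_iff_dist_tendsto_zero]
    have h1 : Tendsto (fun k => dist (x (φ k)) a) atTop (𝓝 0) := by
      rwa [tendsto_iff_dist_tendsto_zero] at hxa'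
    have h2 : Tendsto (fun k : ℕ => 1 / ((k : ℝ) + 1)) atTop (𝓝 0) :=
      tendsto_one_div_add_atTop_nhds_zero_nat
    have hb : ∀ k, dist (y (φ k)) a ≤ 1 / ((k : ℝ) + 1) + dist (x (φ k)) a := by
      intro k
      have hkφ : (k : ℝ) + 1 ≤ (φ k : ℝ) + 1 := by
        have : (k:ℝ) ≤ (φ k : ℝ) := by exact_mod_cast hφ.le_apply
        linarith
      have hmono : 1 / ((φ k : ℝ) + 1) ≤ 1 / ((k : ℝ) + 1) :=
        one_div_le_one_div_of_le (by positivity) hkφ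
      have h3 := hxy (φ k)
      calc dist (y (φ k)) a ≤ dist (y (φ k)) (x (φ k)) + dist (x (φ k)) a := dist_triangle _ _ _
        _ ≤ 1 / ((k : ℝ) + 1) + dist (x (φ k)) a := by
            rw [dist_comm]; linarith
    have hb0 : ∀ k, (0:ℝ) ≤ dist (y (φ k)) a := fun k => dist_nonneg
    have hsum := h2.add h1
    rw [add_zero] at hsum
    exact squeeze_zero hb0 hb hsum
  have hfx : Tendsto (fun k => f (x (φ k))) atTop (𝓝 (f a)) :=
    (f.continuous.tendsto a).comp hxa'
  have hfy' : Tendsto (fun k => f (y (φ k))) atTop (𝓝 (f a)) :=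
    (f.continuous.tendsto a).comp hya
  have hdiff : Tendsto (fun k => |f (x (φ k)) - f (y (φ k))|) atTop (𝓝 0) := by
    have := hfx.sub hfy'
    rw [sub_self] at this
    simpa using this.abs
  have hev : ∀ᶠ k in atTop, ε ≤ |f (x (φ k)) - f (y (φ k))| :=
    Eventually.of_forall fun k => hfy (φ k)
  have := le_of_tendsto_of_tendsto tendsto_const_nhds hdiff hev
  linarith

lemma mor_tendstoUniformly {K : Set E} (hK : IsCompact K) :
    TendstoUniformly (fun n (x : K) => mor f n x) (fun x : K => f x) atTop := by
  rw [Metric.tendstoUniformly_iff]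
  intro ε hε
  obtain ⟨δ, hδ, hmod⟩ := compact_modulus f hK (half_pos hε)
  obtain ⟨N, hN⟩ := exists_nat_ge ((2 * ‖f‖ + 1) / δ)
  rw [eventually_atTop]
  refine ⟨N, fun n hn x => ?_⟩
  have hkey : f x - ε / 2 ≤ mor f n (x : E) := by
    refine le_ciInf fun y => ?_
    show f (x : E) - ε / 2 ≤ f y + n * dist (x : E) y
    by_cases hd : dist (x : E) y < δ
    · have habs := abs_lt.1 (hmod x x.2 y hd)
      have h2 : (0:ℝ) ≤ n * dist (x:E) y := by positivity
      linarith [habs.2]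
    · push_neg at hd
      have h1 : -‖f‖ ≤ f y := neg_le_of_abs_le (f.norm_coe_le_norm y)
      have h2 : 2 * ‖f‖ + 1 ≤ (N : ℝ) * δ := by
        rw [← div_le_iff₀ hδ]; exact hN
      have h3 : (N : ℝ) * δ ≤ (n : ℝ) * dist (x:E) y := by
        have hnN : (N : ℝ) ≤ (n : ℝ) := by exact_mod_cast hn
        exact mul_le_mul hnN hd (le_of_lt hδ) (Nat.cast_nonneg n)
      have h4 : f (x : E) ≤ ‖f‖ := le_of_abs_le (f.norm_coe_le_norm _)
      linarith
  have hub := mor_le f n (x : E)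
  rw [Real.dist_eq]
  have : |f (x:E) - mor f n (x:E)| ≤ ε / 2 := abs_le.2 ⟨by linarith, by linarith⟩
  linarith [half_lt_self hε]
end

section
variable {E : Type*} [MetricSpace E] [MeasurableSpace E] [BorelSpace E]

noncomputable def wmeasure (a : ℕ → ℝ) (x : ℕ → E) : Measure E :=
  Measure.sum (fun k => ENNReal.ofReal (a k) • Measure.dirac (x k))

lemma wmeasure_finite (a : ℕ → ℝ) (ha : ∀ k, 0 ≤ a k) (hs : Summable a) (x : ℕ → E) :
    IsFiniteMeasure (wmeasure a x) := by
  constructor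
  rw [wmeasure, Measure.sum_apply _ MeasurableSet.univ]
  have hc : ∀ k, (ENNReal.ofReal (a k) • Measure.dirac (x k)) Set.univ
      = ENNReal.ofReal (a k) := by
    intro k
    simp [Measure.smul_apply]
  rw [tsum_congr hc, ← ENNReal.ofReal_tsum_of_nonneg ha hs]
  exact ENNReal.ofReal_lt_top

lemma integral_wmeasure (a : ℕ → ℝ) (ha : ∀ k, 0 ≤ a k) (hs : Summable a) (x : ℕ → E)
    (h : BoundedContinuousFunction E ℝ) :
    ∫ y, h y ∂(wmeasure a x) = ∑' k, a k * h (x k) := by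
  haveI := wmeasure_finite a ha hs x
  have hint : Integrable (fun y => h y) (wmeasure a x) := h.integrable _
  rw [wmeasure] at hint ⊢
  rw [integral_sum_measure hint]
  refine tsum_congr fun k => ?_
  rw [integral_smul_measure, integral_dirac, ENNReal.toReal_ofReal (ha k), smul_eq_mul]

lemma lp1_hasSum (c : lp (fun _ : ℕ => ℝ) 1) :
    HasSum (fun k => ‖(c : ℕ → ℝ) k‖) ‖c‖ := by
  have := lp.hasSum_norm (p := (1 : ℝ≥0∞)) (by norm_num) c
  simpa using this

lemma pair_summable (b : ℕ → ℝ) (C : ℝ) (hb : ∀ k, |b k| ≤ C)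
    (c : lp (fun _ : ℕ => ℝ) 1) : Summable (fun k => (c : ℕ → ℝ) k * b k) := by
  refine Summable.of_norm_bounded (g := fun k => ‖(c : ℕ → ℝ) k‖ * C)
    ((lp1_hasSum c).summable.mul_right C) fun k => ?_
  rw [norm_mul]
  exact mul_le_mul_of_nonneg_left ((Real.norm_eq_abs _).le.trans (hb k)) (norm_nonneg _)

lemma pair_norm_summable (b : ℕ → ℝ) (C : ℝ) (hb : ∀ k, |b k| ≤ C)
    (c : lp (fun _ : ℕ => ℝ) 1) : Summable (fun k => ‖(c : ℕ → ℝ) k * b k‖) := by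
  refine Summable.of_nonneg_of_le (fun k => norm_nonneg _) (fun k => ?_)
    ((lp1_hasSum c).summable.mul_right C)
  rw [norm_mul]
  exact mul_le_mul_of_nonneg_left ((Real.norm_eq_abs _).le.trans (hb k)) (norm_nonneg _)

noncomputable def pairL (b : ℕ → ℝ) (C : ℝ) (hb : ∀ k, |b k| ≤ C) :
    lp (fun _ : ℕ => ℝ) 1 →L[ℝ] ℝ :=
  LinearMap.mkContinuous
    { toFun := fun c => ∑' k, (c : ℕ → ℝ) k * b k
      map_add' := by
        intro c d
        simp only [lp.coeFn_add, Pi.add_apply, add_mul]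
        exact Summable.tsum_add (pair_summable b C hb c) (pair_summable b C hb d)
      map_smul' := by
        intro r c
        simp only [lp.coeFn_smul, Pi.smul_apply, smul_eq_mul, RingHom.id_apply, mul_assoc]
        exact _root_.tsum_mul_left } C
    (by
      intro c
      have h1 : ‖∑' k, (c : ℕ → ℝ) k * b k‖ ≤ ∑' k, ‖(c : ℕ → ℝ) k * b k‖ :=
        norm_tsum_le_tsum_norm (pair_norm_summable b C hb c)
      have h2 : ∑' k, ‖(c : ℕ → ℝ) k * b k‖ ≤ ∑' k, ‖(c : ℕ → ℝ) k‖ * C := by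
        refine Summable.tsum_le_tsum (fun k => ?_) (pair_norm_summable b C hb c)
          ((lp1_hasSum c).summable.mul_right C)
        rw [norm_mul]
        exact mul_le_mul_of_nonneg_left ((Real.norm_eq_abs _).le.trans (hb k)) (norm_nonneg _)
      have h3 : ∑' k, ‖(c : ℕ → ℝ) k‖ * C = ‖c‖ * C := by
        rw [_root_.tsum_mul_right, (lp1_hasSum c).tsum_eq]
      calc ‖∑' k, (c : ℕ → ℝ) k * b k‖ ≤ ‖c‖ * C := by linarith
        _ = C * ‖c‖ := mul_comm _ _)

lemma pairL_apply (b : ℕ → ℝ) (C : ℝ) (hb : ∀ k, |b k| ≤ C) (c : lp (fun _ : ℕ => ℝ) 1) :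
    pairL b C hb c = ∑' k, (c : ℕ → ℝ) k * b k := rfl

lemma abs_le_norm_pairL (b : ℕ → ℝ) (C : ℝ) (hb : ∀ k, |b k| ≤ C) (k : ℕ) :
    |b k| ≤ ‖pairL b C hb‖ := by
  set e : lp (fun _ : ℕ => ℝ) 1 := lp.single (E := fun _ : ℕ => ℝ) 1 k (1:ℝ) with he
  have h1 : pairL b C hb e = b k := by
    rw [pairL_apply]
    have hz : ∀ j : ℕ, j ≠ k → (e : ℕ → ℝ) j * b j = 0 := by
      intro j hj
      rw [he]
      rw [lp.single_apply_ne 1 k _ hj, zero_mul]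
    rw [tsum_eq_single k hz, he]
    have hs := lp.single_apply_self (E := fun _ : ℕ => ℝ) 1 k (1:ℝ)
    rw [hs, one_mul]
  have h2 : ‖e‖ = 1 := by
    have := lp.norm_single (p := (1:ℝ≥0∞)) (E := fun _ : ℕ => ℝ) (by norm_num)
      k (1:ℝ)
    rw [he]
    simpa using this
  calc |b k| = ‖pairL b C hb e‖ := by rw [h1, Real.norm_eq_abs]
    _ ≤ ‖pairL b C hb‖ * ‖e‖ := (pairL b C hb).le_opNorm _
    _ = ‖pairL b C hb‖ := by rw [h2, mul_one]

lemma norm_bound [Nonempty E] {F : ℕ → BoundedContinuousFunction E ℝ}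
    (hsm : ∀ μ : Measure E, IsFiniteMeasure μ → CauchySeq fun n => ∫ y, F n y ∂μ) :
    ∃ M : ℝ, ∀ n, ‖F n‖ ≤ M := by
  have hpt : ∀ n : ℕ, ∃ x : E, ‖F n‖ - 1 < ‖F n x‖ := by
    intro n
    have h : ‖F n‖ - 1 < ⨆ x, ‖F n x‖ := by
      rw [← BoundedContinuousFunction.norm_eq_iSup_norm]; linarith
    exact exists_lt_of_lt_ciSup h
  choose xp hxp using hpt
  have hbb : ∀ n k, |F n (xp k)| ≤ ‖F n‖ := fun n k => by
    simpa [Real.norm_eq_abs] using (F n).norm_coe_le_norm (xp k)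
  set T : ℕ → (lp (fun _ : ℕ => ℝ) 1 →L[ℝ] ℝ) := fun n =>
    pairL (fun k => F n (xp k)) ‖F n‖ (hbb n) with hT
  have hpoint : ∀ c : lp (fun _ : ℕ => ℝ) 1, ∃ C, ∀ n, ‖T n c‖ ≤ C := by
    intro c
    set ap : ℕ → ℝ := fun k => max ((c : ℕ → ℝ) k) 0 with hap
    set am : ℕ → ℝ := fun k => max (-(c : ℕ → ℝ) k) 0 with ham
    have hap0 : ∀ k, 0 ≤ ap k := fun k => le_max_right _ _
    have ham0 : ∀ k, 0 ≤ am k := fun k => le_max_right _ _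
    have haple : ∀ k, ap k ≤ ‖(c : ℕ → ℝ) k‖ := fun k => by
      rw [Real.norm_eq_abs]; exact max_le (le_abs_self _) (abs_nonneg _)
    have hamle : ∀ k, am k ≤ ‖(c : ℕ → ℝ) k‖ := fun k => by
      rw [Real.norm_eq_abs]; exact max_le (neg_le_abs _) (abs_nonneg _)
    have hsap : Summable ap := Summable.of_nonneg_of_le hap0 haple (lp1_hasSum c).summable
    have hsam : Summable am := Summable.of_nonneg_of_le ham0 hamle (lp1_hasSum c).summable
    haveI hm1 := wmeasure_finite ap hap0 hsap xp
    haveI hm2 := wmeasure_finite am ham0 hsam xp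
    obtain ⟨R1, hR1pos, hR1⟩ := cauchySeq_bdd (hsm _ hm1)
    obtain ⟨R2, hR2pos, hR2⟩ := cauchySeq_bdd (hsm _ hm2)
    refine ⟨(|∫ y, F 0 y ∂(wmeasure ap xp)| + R1) + (|∫ y, F 0 y ∂(wmeasure am xp)| + R2),
      fun n => ?_⟩
    have hsummp : Summable (fun k => ap k * F n (xp k)) := by
      refine Summable.of_norm_bounded (g := fun k => ‖(c : ℕ → ℝ) k‖ * ‖F n‖)
        ((lp1_hasSum c).summable.mul_right _) fun k => ?_
      rw [norm_mul, Real.norm_eq_abs (ap k), abs_of_nonneg (hap0 k)]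
      exact mul_le_mul (haple k) (by simpa [Real.norm_eq_abs] using hbb n k)
        (norm_nonneg _) (norm_nonneg _)
    have hsummm : Summable (fun k => am k * F n (xp k)) := by
      refine Summable.of_norm_bounded (g := fun k => ‖(c : ℕ → ℝ) k‖ * ‖F n‖)
        ((lp1_hasSum c).summable.mul_right _) fun k => ?_
      rw [norm_mul, Real.norm_eq_abs (am k), abs_of_nonneg (ham0 k)]
      exact mul_le_mul (hamle k) (by simpa [Real.norm_eq_abs] using hbb n k)
        (norm_nonneg _) (norm_nonneg _)
    have hsplit : T n c = (∑' k, ap k * F n (xp k)) - ∑' k, am k * F n (xp k) := by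
      rw [hT, pairL_apply]
      have hc : ∀ k, (c : ℕ → ℝ) k * F n (xp k)
          = ap k * F n (xp k) - am k * F n (xp k) := by
        intro k
        have hsub : ap k - am k = (c : ℕ → ℝ) k := by
          rcases le_total 0 ((c : ℕ → ℝ) k) with h | h
          · rw [hap, ham]
            simp only [max_eq_left h, max_eq_right (neg_nonpos.2 h)]
            ring
          · rw [hap, ham]
            simp only [max_eq_right h, max_eq_left (neg_nonneg.2 h)]
            ring
        rw [← hsub]; ring
      rw [tsum_congr hc]
      exact Summable.tsum_sub hsummp hsummm
    have e1 : ∑' k, ap k * F n (xp k) = ∫ y, F n y ∂(wmeasure ap xp) :=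
      (integral_wmeasure ap hap0 hsap xp (F n)).symm
    have e2 : ∑' k, am k * F n (xp k) = ∫ y, F n y ∂(wmeasure am xp) :=
      (integral_wmeasure am ham0 hsam xp (F n)).symm
    have b1 : |∫ y, F n y ∂(wmeasure ap xp)| ≤ |∫ y, F 0 y ∂(wmeasure ap xp)| + R1 := by
      have := hR1 n 0
      rw [Real.dist_eq] at this
      have habs := abs_sub_abs_le_abs_sub (∫ y, F n y ∂(wmeasure ap xp))
        (∫ y, F 0 y ∂(wmeasure ap xp))
      linarith
    have b2 : |∫ y, F n y ∂(wmeasure am xp)| ≤ |∫ y, F 0 y ∂(wmeasure am xp)| + R2 := by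
      have := hR2 n 0
      rw [Real.dist_eq] at this
      have habs := abs_sub_abs_le_abs_sub (∫ y, F n y ∂(wmeasure am xp))
        (∫ y, F 0 y ∂(wmeasure am xp))
      linarith
    rw [hsplit, e1, e2, Real.norm_eq_abs]
    calc |∫ y, F n y ∂(wmeasure ap xp) - ∫ y, F n y ∂(wmeasure am xp)|
        ≤ |∫ y, F n y ∂(wmeasure ap xp)| + |∫ y, F n y ∂(wmeasure am xp)| := abs_sub _ _
      _ ≤ _ := by linarith
  obtain ⟨C', hC'⟩ := banach_steinhaus hpoint
  refine ⟨C' + 1, fun n => ?_⟩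
  have h1 := abs_le_norm_pairL (fun k => F n (xp k)) ‖F n‖ (hbb n) n
  have h2 := hxp n
  have h3 := hC' n
  rw [Real.norm_eq_abs] at h2
  have h4 : ‖pairL (fun k => F n (xp k)) ‖F n‖ (hbb n)‖ = ‖T n‖ := rfl
  rw [h4] at h1
  linarith

lemma complete_of_uc [Nonempty E]
    (hU : ∀ f : BoundedContinuousFunction E ℝ, UniformContinuous ⇑f)
    (f : ℕ → BoundedContinuousFunction E ℝ)
    (hC : ∀ U ∈ @nhds _ (tauK E) (0 : BoundedContinuousFunction E ℝ),
      ∃ N : ℕ, ∀ m ≥ N, ∀ n ≥ N, f m - f n ∈ U) :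
    ∃ g : BoundedContinuousFunction E ℝ, UniformContinuous ⇑g ∧
      Tendsto f atTop (@nhds _ (tauK E) g) := by
  -- pointwise limit
  have hptC : ∀ x : E, CauchySeq fun n => f n x := by
    intro x
    rw [Metric.cauchySeq_iff]
    intro ε hε
    obtain ⟨N, hN⟩ := cauchy_tauK_compact hC isCompact_singleton
      (Set.singleton_nonempty x) hε
    exact ⟨N, fun m hm n hn => hN m hm n hn x rfl⟩
  have hex : ∀ x : E, ∃ L : ℝ, Tendsto (fun n => f n x) atTop (𝓝 L) :=
    fun x => cauchySeq_tendsto_of_complete (hptC x)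
  choose g0 hg0 using hex
  -- uniform convergence on compacts
  have hUC : ∀ K : Set E, IsCompact K → K.Nonempty →
      TendstoUniformlyOn (fun n x => f n x) g0 atTop K := by
    intro K hK hne
    have hc : UniformCauchySeqOn (fun n x => f n x) atTop K := by
      rw [Metric.uniformCauchySeqOn_iff]
      intro ε hε
      obtain ⟨N, hN⟩ := cauchy_tauK_compact hC hK hne hε
      exact ⟨N, hN⟩
    exact hc.tendstoUniformlyOn_of_tendsto fun x _ => hg0 x
  -- uniform norm bound
  obtain ⟨M, hM⟩ := norm_bound (F := f) (fun μ hμ => by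
    haveI := hμ
    have h := cauchy_tauK_sm hC μ.toSignedMeasure
    have he : (fun n => intSM' μ.toSignedMeasure ⇑(f n)) = fun n => ∫ y, f n y ∂μ := by
      funext n; exact intSM'_toSignedMeasure μ ⇑(f n)
    rwa [he] at h)
  have hg0b : ∀ x, ‖g0 x‖ ≤ M := by
    intro x
    refine le_of_tendsto ((hg0 x).norm) (Eventually.of_forall fun n => ?_)
    exact ((f n).norm_coe_le_norm x).trans (hM n)
  -- continuity
  have hcont : Continuous g0 := by
    apply SeqContinuous.continuous
    intro u a hu
    have hK : IsCompact (insert a (Set.range u)) := hu.isCompact_insert_range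
    have hconton : ContinuousOn g0 (insert a (Set.range u)) :=
      (hUC _ hK ⟨a, Set.mem_insert a _⟩).continuousOn
        (Frequently.of_forall fun n => (f n).continuous.continuousOn)
    have hwa : ContinuousWithinAt g0 (insert a (Set.range u)) a :=
      hconton a (Set.mem_insert a _)
    have hu' : Tendsto u atTop (𝓝[insert a (Set.range u)] a) :=
      tendsto_nhdsWithin_iff.2 ⟨hu, Eventually.of_forall fun k =>
        Set.mem_insert_of_mem _ (Set.mem_range_self k)⟩
    exact hwa.tendsto.comp hu'
  set g : BoundedContinuousFunction E ℝ :=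
    BoundedContinuousFunction.ofNormedAddCommGroup g0 hcont M hg0b with hg
  have hgc : ∀ x, g x = g0 x := fun x => rfl
  refine ⟨g, hU g, ?_⟩
  rw [tendsto_tauK_iff]
  constructor
  · intro K hK hne
    have := (hUC K hK hne)
    rw [tendstoUniformlyOn_iff_tendstoUniformly_comp_coe] at this
    exact this
  · intro s
    have hpos : Tendsto (fun n => ∫ x, f n x ∂s.toJordanDecomposition.posPart) atTop
        (𝓝 (∫ x, g x ∂s.toJordanDecomposition.posPart)) := by
      refine tendsto_integral_of_dominated_convergence (fun _ => M)
        (fun n => (f n).continuous.aestronglyMeasurable) (integrable_const M)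
        (fun n => Eventually.of_forall fun x => ((f n).norm_coe_le_norm x).trans (hM n))
        (Eventually.of_forall fun x => hg0 x)
    have hneg : Tendsto (fun n => ∫ x, f n x ∂s.toJordanDecomposition.negPart) atTop
        (𝓝 (∫ x, g x ∂s.toJordanDecomposition.negPart)) := by
      refine tendsto_integral_of_dominated_convergence (fun _ => M)
        (fun n => (f n).continuous.aestronglyMeasurable) (integrable_const M)
        (fun n => Eventually.of_forall fun x => ((f n).norm_coe_le_norm x).trans (hM n))
        (Eventually.of_forall fun x => hg0 x)
    exact hpos.sub hneg

lemma uc_of_complete [Nonempty E]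
    (hcomp : ∀ f : ℕ → BoundedContinuousFunction E ℝ,
        (∀ n, UniformContinuous ⇑(f n)) →
        (∀ U ∈ @nhds _ (tauK E) (0 : BoundedContinuousFunction E ℝ),
          ∃ N : ℕ, ∀ m ≥ N, ∀ n ≥ N, f m - f n ∈ U) →
        ∃ g : BoundedContinuousFunction E ℝ, UniformContinuous ⇑g ∧
          Tendsto f atTop (@nhds _ (tauK E) g))
    (f : BoundedContinuousFunction E ℝ) : UniformContinuous ⇑f := by
  set F : ℕ → BoundedContinuousFunction E ℝ := fun n =>
    BoundedContinuousFunction.ofNormedAddCommGroup (mor f n) (mor_continuous f n) ‖f‖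
      (fun x => by simpa [Real.norm_eq_abs] using mor_abs_le f n x) with hF
  have hptw : ∀ x : E, Tendsto (fun n => mor f n x) atTop (𝓝 (f x)) := by
    intro x
    have := (mor_tendstoUniformly f (isCompact_singleton (x := x))).tendsto_at
      ⟨x, rfl⟩
    exact this
  have htd : Tendsto F atTop (@nhds _ (tauK E) f) := by
    rw [tendsto_tauK_iff]
    constructor
    · intro K hK hne
      exact mor_tendstoUniformly f hK
    · intro s
      have hpos : Tendsto (fun n => ∫ x, F n x ∂s.toJordanDecomposition.posPart) atTop
          (𝓝 (∫ x, f x ∂s.toJordanDecomposition.posPart)) := by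
        refine tendsto_integral_of_dominated_convergence (fun _ => ‖f‖)
          (fun n => (F n).continuous.aestronglyMeasurable) (integrable_const ‖f‖)
          (fun n => Eventually.of_forall fun x => ?_)
          (Eventually.of_forall fun x => hptw x)
        exact (Real.norm_eq_abs _).le.trans (mor_abs_le f n x)
      have hneg : Tendsto (fun n => ∫ x, F n x ∂s.toJordanDecomposition.negPart) atTop
          (𝓝 (∫ x, f x ∂s.toJordanDecomposition.negPart)) := by
        refine tendsto_integral_of_dominated_convergence (fun _ => ‖f‖)
          (fun n => (F n).continuous.aestronglyMeasurable) (integrable_const ‖f‖)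
          (fun n => Eventually.of_forall fun x => ?_)
          (Eventually.of_forall fun x => hptw x)
        exact (Real.norm_eq_abs _).le.trans (mor_abs_le f n x)
      exact hpos.sub hneg
  obtain ⟨g, hguc, hgt⟩ := hcomp F (fun n => mor_uniformContinuous f n)
    (cauchy_of_tendsto_tauK htd)
  have hfg : f = g := by
    ext x
    have h2 : Tendsto (fun n => F n x) atTop (𝓝 (g x)) := by
      have := ((tendsto_tauK_iff.1 hgt).1 {x} isCompact_singleton
        (Set.singleton_nonempty x)).tendsto_at ⟨x, rfl⟩
      exact this
    exact tendsto_nhds_unique (hptw x) h2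
  rw [hfg]
  exact hguc
end

/-- (UC_b(E), τ_K) is sequentially complete (every τ_K-Cauchy sequence of
bounded uniformly continuous functions τ_K-converges to a bounded uniformly continuous
function) iff UC_b(E) = C_b(E), i.e. every bounded continuous function on E is uniformly
continuous. -/
theorem stmt19 {E : Type*} [MetricSpace E] [MeasurableSpace E] [BorelSpace E] :
    (∀ f : ℕ → BoundedContinuousFunction E ℝ,
        (∀ n, UniformContinuous ⇑(f n)) →
        (∀ U ∈ @nhds _ (tauK E) (0 : BoundedContinuousFunction E ℝ),
          ∃ N : ℕ, ∀ m ≥ N, ∀ n ≥ N, f m - f n ∈ U) →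
        ∃ g : BoundedContinuousFunction E ℝ, UniformContinuous ⇑g ∧
          Tendsto f atTop (@nhds _ (tauK E) g)) ↔
      ∀ f : BoundedContinuousFunction E ℝ, UniformContinuous ⇑f := by
  rcases isEmpty_or_nonempty E with hE | hE
  · have huc : ∀ f : BoundedContinuousFunction E ℝ, UniformContinuous ⇑f := by
      intro f
      have h : (𝓤 E) = ⊥ := filter_eq_bot_of_isEmpty _
      rw [UniformContinuous, h]
      exact tendsto_bot
    constructor
    · intro _ f
      exact huc f
    · intro _ f _ _
      refine ⟨f 0, huc (f 0), ?_⟩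
      have hconst : f = fun _ => f 0 := by
        funext n
        ext x
        exact hE.elim x
      rw [hconst]
      have hp : Tendsto (fun _ : ℕ => f 0) atTop (pure (f 0) : Filter _) := by
        rw [Filter.tendsto_pure]
        exact Eventually.of_forall fun _ => rfl
      exact hp.mono_right (@pure_le_nhds _ (tauK E) (f 0))
  · constructor
    · intro hcomp
      exact uc_of_complete hcomp
    · intro hU f _ hC
      exact complete_of_uc hU f hC
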